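/- Let A and B be finite-dimensional k-algebras, M an A-B-bimodule and N a B-A-bimodule such that the regular A-A-bimodule A is isomorphic to a direct summand of M ⊗_B N. Then: (i) the left A-module M is faithful (its annihilator in A is zero), and every indecomposable left A-module which is both projective and injective is isomorphic to a direct summand of M as a left A-module; (ii) the right A-module N is faithful, and every indecomposable right A-module which is both projective and injective is isomorphic to a direct summand of N as a right A-module. -/

import Mathlib

open scoped TensorProduct
open MulOpposite

universe u

namespace JJ

noncomputable section

section BalTensor

variable (B : Type u) [Ring B] (M : Type u) [AddCommGroup M] [Module Bᵐᵒᵖ M]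
  (N : Type u) [AddCommGroup N] [Module B N]

/-- The subgroup of relations defining the balanced tensor product `M ⊗_B N`. -/
def balRel : Submodule ℤ (TensorProduct ℤ M N) :=
  Submodule.span ℤ { z | ∃ (b : B) (m : M) (n : N),
    z = (op b • m) ⊗ₜ[ℤ] n - m ⊗ₜ[ℤ] (b • n) }

/-- The balanced tensor product `M ⊗_B N` of a right `B`-module `M` and a left `B`-module `N`. -/
def BalTensor : Type u := TensorProduct ℤ M N ⧸ balRel B M N

instance : AddCommGroup (BalTensor B M N) :=
  inferInstanceAs (AddCommGroup (TensorProduct ℤ M N ⧸ balRel B M N))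

/-- The canonical projection onto the balanced tensor product. -/
def BalTensor.mk : TensorProduct ℤ M N →+ BalTensor B M N :=
  (balRel B M N).mkQ.toAddMonoidHom

/-- The image of a pure tensor in the balanced tensor product. -/
def BalTensor.tmul (m : M) (n : N) : BalTensor B M N := BalTensor.mk B M N (m ⊗ₜ n)

lemma BalTensor.mk_surjective : Function.Surjective (BalTensor.mk B M N) :=
  Submodule.mkQ_surjective _

lemma BalTensor.balance (b : B) (m : M) (n : N) :
    BalTensor.tmul B M N (op b • m) n = BalTensor.tmul B M N m (b • n) := by
  have h : ((op b • m) ⊗ₜ[ℤ] n - m ⊗ₜ[ℤ] (b • n)) ∈ balRel B M N :=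
    Submodule.subset_span ⟨b, m, n, rfl⟩
  have h2 := (Submodule.Quotient.mk_eq_zero (balRel B M N)).2 h
  rw [Submodule.Quotient.mk_sub] at h2
  exact sub_eq_zero.1 h2

end BalTensor

section LeftAction

variable (B : Type u) [Ring B] (M : Type u) [AddCommGroup M] [Module Bᵐᵒᵖ M]
  (N : Type u) [AddCommGroup N] [Module B N]
  (A : Type u) [Ring A] [Module A M] [SMulCommClass A Bᵐᵒᵖ M]

/-- The left action of `a : A` on the plain tensor product. -/
def lActAux (a : A) : TensorProduct ℤ M N →ₗ[ℤ] TensorProduct ℤ M N :=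
  LinearMap.rTensor N (DistribMulAction.toAddMonoidHom M a).toIntLinearMap

lemma lActAux_tmul (a : A) (m : M) (n : N) :
    lActAux M N A a (m ⊗ₜ n) = (a • m) ⊗ₜ n := by
  rfl

lemma lActAux_rel (a : A) :
    balRel B M N ≤ (balRel B M N).comap (lActAux M N A a) := by
  rw [balRel, Submodule.span_le]
  rintro z ⟨b, m, n, rfl⟩
  simp only [SetLike.mem_coe, Submodule.mem_comap, map_sub, lActAux_tmul]
  rw [smul_comm a (op b) m]
  exact Submodule.subset_span ⟨b, a • m, n, rfl⟩

/-- The left action of `A` on the balanced tensor product. -/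
def lAct (a : A) : BalTensor B M N →ₗ[ℤ] BalTensor B M N :=
  Submodule.mapQ _ _ (lActAux M N A a) (lActAux_rel B M N A a)

instance : SMul A (BalTensor B M N) := ⟨fun a x => lAct B M N A a x⟩

lemma BalTensor.lsmul_mk (a : A) (x : TensorProduct ℤ M N) :
    a • (BalTensor.mk B M N x) = BalTensor.mk B M N (lActAux M N A a x) := rfl

lemma BalTensor.lsmul_tmul (a : A) (m : M) (n : N) :
    a • (BalTensor.tmul B M N m n) = BalTensor.tmul B M N (a • m) n := by
  rw [BalTensor.tmul, BalTensor.lsmul_mk, lActAux_tmul]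
  rfl

instance BalTensor.instLeftModule : Module A (BalTensor B M N) where
  one_smul x := by
    obtain ⟨y, rfl⟩ := BalTensor.mk_surjective B M N x
    rw [BalTensor.lsmul_mk]
    congr 1
    have h : lActAux M N A (1 : A) = LinearMap.id :=
      TensorProduct.ext' fun m n => by
        show lActAux M N A 1 (m ⊗ₜ n) = LinearMap.id (m ⊗ₜ n)
        rw [lActAux_tmul, one_smul]; rfl
    rw [h]; rfl
  mul_smul a b x := by
    obtain ⟨y, rfl⟩ := BalTensor.mk_surjective B M N x
    rw [BalTensor.lsmul_mk, BalTensor.lsmul_mk, BalTensor.lsmul_mk]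
    congr 1
    have h : lActAux M N A (a * b) = (lActAux M N A a).comp (lActAux M N A b) :=
      TensorProduct.ext' fun m n => by
        show lActAux M N A (a * b) (m ⊗ₜ n) = (lActAux M N A a).comp (lActAux M N A b) (m ⊗ₜ n)
        simp only [LinearMap.comp_apply, lActAux_tmul, mul_smul]
    rw [h]; rfl
  smul_zero a := map_zero (lAct B M N A a)
  smul_add a x y := map_add (lAct B M N A a) x y
  add_smul a b x := by
    obtain ⟨y, rfl⟩ := BalTensor.mk_surjective B M N x
    rw [BalTensor.lsmul_mk, BalTensor.lsmul_mk, BalTensor.lsmul_mk, ← map_add]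
    congr 1
    have h : lActAux M N A (a + b) = lActAux M N A a + lActAux M N A b :=
      TensorProduct.ext' fun m n => by
        show lActAux M N A (a + b) (m ⊗ₜ n) = (lActAux M N A a + lActAux M N A b) (m ⊗ₜ n)
        simp only [LinearMap.add_apply, lActAux_tmul, add_smul, TensorProduct.add_tmul]
    rw [h]; rfl
  zero_smul x := by
    obtain ⟨y, rfl⟩ := BalTensor.mk_surjective B M N x
    rw [BalTensor.lsmul_mk]
    have h : lActAux M N A (0 : A) = 0 :=
      TensorProduct.ext' fun m n => by
        show lActAux M N A 0 (m ⊗ₜ n) = (0 : TensorProduct ℤ M N →ₗ[ℤ] TensorProduct ℤ M N) (m ⊗ₜ n)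
        simp only [lActAux_tmul, zero_smul, TensorProduct.zero_tmul, LinearMap.zero_apply]
    rw [h]
    simp

end LeftAction

section RightAction

variable (B : Type u) [Ring B] (M : Type u) [AddCommGroup M] [Module Bᵐᵒᵖ M]
  (N : Type u) [AddCommGroup N] [Module B N]
  (C : Type u) [Ring C] [Module Cᵐᵒᵖ N] [SMulCommClass B Cᵐᵒᵖ N]

/-- The right action of `c : Cᵐᵒᵖ` on the plain tensor product. -/
def rActAux (c : Cᵐᵒᵖ) : TensorProduct ℤ M N →ₗ[ℤ] TensorProduct ℤ M N :=
  LinearMap.lTensor M (DistribMulAction.toAddMonoidHom N c).toIntLinearMap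

lemma rActAux_tmul (c : Cᵐᵒᵖ) (m : M) (n : N) :
    rActAux M N C c (m ⊗ₜ n) = m ⊗ₜ (c • n) := by
  rfl

lemma rActAux_rel (c : Cᵐᵒᵖ) :
    balRel B M N ≤ (balRel B M N).comap (rActAux M N C c) := by
  rw [balRel, Submodule.span_le]
  rintro z ⟨b, m, n, rfl⟩
  simp only [SetLike.mem_coe, Submodule.mem_comap, map_sub, rActAux_tmul]
  rw [← smul_comm b c n]
  exact Submodule.subset_span ⟨b, m, c • n, rfl⟩

/-- The right action of `Cᵐᵒᵖ` on the balanced tensor product. -/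
def rAct (c : Cᵐᵒᵖ) : BalTensor B M N →ₗ[ℤ] BalTensor B M N :=
  Submodule.mapQ _ _ (rActAux M N C c) (rActAux_rel B M N C c)

instance : SMul Cᵐᵒᵖ (BalTensor B M N) := ⟨fun c x => rAct B M N C c x⟩

lemma BalTensor.rsmul_mk (c : Cᵐᵒᵖ) (x : TensorProduct ℤ M N) :
    c • (BalTensor.mk B M N x) = BalTensor.mk B M N (rActAux M N C c x) := rfl

lemma BalTensor.rsmul_tmul (c : Cᵐᵒᵖ) (m : M) (n : N) :
    c • (BalTensor.tmul B M N m n) = BalTensor.tmul B M N m (c • n) := by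
  rw [BalTensor.tmul, BalTensor.rsmul_mk, rActAux_tmul]
  rfl

instance BalTensor.instRightModule : Module Cᵐᵒᵖ (BalTensor B M N) where
  one_smul x := by
    obtain ⟨y, rfl⟩ := BalTensor.mk_surjective B M N x
    rw [BalTensor.rsmul_mk]
    congr 1
    have h : rActAux M N C (1 : Cᵐᵒᵖ) = LinearMap.id :=
      TensorProduct.ext' fun m n => by
        show rActAux M N C 1 (m ⊗ₜ n) = LinearMap.id (m ⊗ₜ n)
        rw [rActAux_tmul, one_smul]; rfl
    rw [h]; rfl
  mul_smul a b x := by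
    obtain ⟨y, rfl⟩ := BalTensor.mk_surjective B M N x
    rw [BalTensor.rsmul_mk, BalTensor.rsmul_mk, BalTensor.rsmul_mk]
    congr 1
    have h : rActAux M N C (a * b) = (rActAux M N C a).comp (rActAux M N C b) :=
      TensorProduct.ext' fun m n => by
        show rActAux M N C (a * b) (m ⊗ₜ n) = (rActAux M N C a).comp (rActAux M N C b) (m ⊗ₜ n)
        simp only [LinearMap.comp_apply, rActAux_tmul, mul_smul]
    rw [h]; rfl
  smul_zero c := map_zero (rAct B M N C c)
  smul_add c x y := map_add (rAct B M N C c) x y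
  add_smul a b x := by
    obtain ⟨y, rfl⟩ := BalTensor.mk_surjective B M N x
    rw [BalTensor.rsmul_mk, BalTensor.rsmul_mk, BalTensor.rsmul_mk, ← map_add]
    congr 1
    have h : rActAux M N C (a + b) = rActAux M N C a + rActAux M N C b :=
      TensorProduct.ext' fun m n => by
        show rActAux M N C (a + b) (m ⊗ₜ n) = (rActAux M N C a + rActAux M N C b) (m ⊗ₜ n)
        simp only [LinearMap.add_apply, rActAux_tmul, add_smul, TensorProduct.tmul_add]
    rw [h]; rfl
  zero_smul x := by
    obtain ⟨y, rfl⟩ := BalTensor.mk_surjective B M N x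
    rw [BalTensor.rsmul_mk]
    have h : rActAux M N C (0 : Cᵐᵒᵖ) = 0 :=
      TensorProduct.ext' fun m n => by
        show rActAux M N C 0 (m ⊗ₜ n) = (0 : TensorProduct ℤ M N →ₗ[ℤ] TensorProduct ℤ M N) (m ⊗ₜ n)
        simp only [rActAux_tmul, zero_smul, TensorProduct.tmul_zero, LinearMap.zero_apply]
    rw [h]
    simp

end RightAction

section Comm

variable (B : Type u) [Ring B] (M : Type u) [AddCommGroup M] [Module Bᵐᵒᵖ M]
  (N : Type u) [AddCommGroup N] [Module B N]
  (A : Type u) [Ring A] [Module A M] [SMulCommClass A Bᵐᵒᵖ M]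
  (C : Type u) [Ring C] [Module Cᵐᵒᵖ N] [SMulCommClass B Cᵐᵒᵖ N]

instance BalTensor.instSMulCommClass : SMulCommClass A Cᵐᵒᵖ (BalTensor B M N) := by
  constructor
  intro a c x
  obtain ⟨y, rfl⟩ := BalTensor.mk_surjective B M N x
  rw [BalTensor.rsmul_mk, BalTensor.lsmul_mk, BalTensor.lsmul_mk, BalTensor.rsmul_mk]
  congr 1
  have h : (lActAux M N A a).comp (rActAux M N C c)
      = (rActAux M N C c).comp (lActAux M N A a) :=
    TensorProduct.ext' fun m n => by
      show lActAux M N A a (rActAux M N C c (m ⊗ₜ n)) = rActAux M N C c (lActAux M N A a (m ⊗ₜ n))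
      simp only [LinearMap.comp_apply, lActAux_tmul, rActAux_tmul]
  exact DFunLike.congr_fun h y

end Comm

section BimodHom

variable (A : Type u) [Ring A] (C : Type u) [Ring C]
variable (X : Type u) [AddCommGroup X] [Module A X] [Module Cᵐᵒᵖ X]
variable (Y : Type u) [AddCommGroup Y] [Module A Y] [Module Cᵐᵒᵖ Y]

/-- A map of `(A,C)`-bimodules: additive, left `A`-equivariant and right `C`-equivariant. -/
structure IsBimodHom (f : X → Y) : Prop where
  map_add : ∀ x y, f (x + y) = f x + f y
  map_lsmul : ∀ (a : A) (x : X), f (a • x) = a • f x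
  map_rsmul : ∀ (c : Cᵐᵒᵖ) (x : X), f (c • x) = c • f x

/-- `X` is (isomorphic to) a direct summand of `Y` as an `(A,C)`-bimodule,
i.e. a retract of `Y`. -/
def IsBimodSummand : Prop :=
  ∃ (i : X → Y) (p : Y → X), IsBimodHom A C X Y i ∧ IsBimodHom A C Y X p ∧ ∀ x, p (i x) = x

end BimodHom

section Jorder

variable (k : Type u) [Field k]

/-- A finite-dimensional `(A,B)`-bimodule over `k`, whose two induced `k`-actions agree
with the given one. -/
structure BimodData (A B : Type u) [Ring A] [Ring B] [Algebra k A] [Algebra k B] :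
    Type (u + 1) where
  X : Type u
  [acg : AddCommGroup X]
  [modk : Module k X]
  [modl : Module A X]
  [modr : Module Bᵐᵒᵖ X]
  [scc : SMulCommClass A Bᵐᵒᵖ X]
  [tl : IsScalarTower k A X]
  [tr : IsScalarTower k Bᵐᵒᵖ X]
  [fd : FiniteDimensional k X]

attribute [instance] BimodData.acg BimodData.modk BimodData.modl BimodData.modr BimodData.scc
  BimodData.tl BimodData.tr BimodData.fd

variable (A B : Type u) [Ring A] [Ring B] [Algebra k A] [Algebra k B]

/-- `A ≥_J B`: there are finite-dimensional bimodules `M`, `N` such that the regular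
`A`-`A`-bimodule `A` is a direct summand of `M ⊗_B N`. -/
def Jge : Prop :=
  ∃ (M : BimodData k A B) (N : BimodData k B A),
    IsBimodSummand A A A (BalTensor B M.X N.X)

/-- `A ≤_J B`. -/
def Jle : Prop := Jge k B A

/-- `A ∼_J B`: two-sided equivalence. -/
def Jequiv : Prop := Jge k A B ∧ Jge k B A

/-- `A >_J B`: strict two-sided inequality. -/
def Jgt : Prop := Jge k A B ∧ ¬ Jge k B A

end Jorder


section Stmt4

/-- An indecomposable module: nonzero, and admitting no splitting into
two nonzero complementary submodules. -/
def IsIndecomposableModule (R X : Type u) [Ring R] [AddCommGroup X] [Module R X] : Prop :=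
  Nontrivial X ∧ ∀ S T : Submodule R X, IsCompl S T → S = ⊥ ∨ T = ⊥

open Filter in
lemma end_unit_or_nilpotent {R P : Type u} [Ring R] [AddCommGroup P] [Module R P]
    [IsArtinian R P] [IsNoetherian R P]
    (hind : IsIndecomposableModule R P) (f : Module.End R P) :
    IsUnit f ∨ IsNilpotent f := by
  obtain ⟨n, hn⟩ := eventually_atTop.mp
    (LinearMap.eventually_isCompl_ker_pow_range_pow (f : P →ₗ[R] P))
  have hm := hn (n + 1) (Nat.le_succ n)
  rcases hind.2 _ _ hm with hker | hrange
  · left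
    rw [Module.End.isUnit_iff]
    have hinj : Function.Injective (f ^ (n + 1)) := by
      rw [← LinearMap.ker_eq_bot]; exact hker
    have hsur : Function.Surjective (f ^ (n + 1)) := by
      rw [← LinearMap.range_eq_top]
      have hco := hm.codisjoint
      rw [hker] at hco
      exact codisjoint_bot.mp hco.symm
    constructor
    · have h1 : ⇑(f ^ (n + 1)) = ⇑(f ^ n) ∘ ⇑f := by rw [pow_succ]; rfl
      rw [h1] at hinj
      exact hinj.of_comp
    · have h2 : ⇑(f ^ (n + 1)) = ⇑f ∘ ⇑(f ^ n) := by rw [pow_succ']; rfl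
      rw [h2] at hsur
      exact hsur.of_comp
  · right
    exact ⟨n + 1, LinearMap.range_eq_bot.mp hrange⟩

lemma retract_of_sum {R MM P J : Type u} [Ring R] [AddCommGroup MM] [Module R MM]
    [AddCommGroup P] [Module R P] [IsArtinian R P] [IsNoetherian R P]
    (hind : IsIndecomposableModule R P) (F : Finset J) :
    ∀ (a : J → P →ₗ[R] MM) (b : J → MM →ₗ[R] P),
      ∑ j ∈ F, b j ∘ₗ a j = (1 : Module.End R P) →
      ∃ (ι : P →ₗ[R] MM) (π : MM →ₗ[R] P), ∀ x, π (ι x) = x := by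
  classical
  induction F using Finset.induction_on with
  | empty =>
      intro a b hsum
      exfalso
      have hnt : Nontrivial P := hind.1
      obtain ⟨x, hx⟩ := exists_ne (0 : P)
      have h0 : (0 : Module.End R P) = 1 := by simpa using hsum
      exact hx (by simpa using DFunLike.congr_fun h0.symm x)
  | @insert j F hj ih =>
      intro a b hsum
      rcases end_unit_or_nilpotent hind (b j ∘ₗ a j) with hu | hnil
      · obtain ⟨u, hu⟩ := hu
        refine ⟨a j, (↑u⁻¹ : Module.End R P) ∘ₗ b j, fun x => ?_⟩
        have h3 : ((↑u⁻¹ : Module.End R P) * ↑u) x = x := by rw [u.inv_mul]; rfl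
        rw [Module.End.mul_apply] at h3
        show (↑u⁻¹ : Module.End R P) (b j (a j x)) = x
        have h4 : b j (a j x) = (↑u : Module.End R P) x := by rw [hu]; rfl
        rw [h4]; exact h3
      · have hone : IsUnit ((1 : Module.End R P) - b j ∘ₗ a j) :=
          IsNilpotent.isUnit_one_sub hnil
        obtain ⟨u, hu⟩ := hone
        rw [Finset.sum_insert hj] at hsum
        have hrest : ∑ i ∈ F, b i ∘ₗ a i = (↑u : Module.End R P) := by
          rw [hu]
          exact eq_sub_of_add_eq' hsum
        apply ih (fun i => (a i) ∘ₗ ((↑u⁻¹ : Module.End R P) : P →ₗ[R] P)) b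
        have hcomp : ∑ i ∈ F, b i ∘ₗ ((a i) ∘ₗ ((↑u⁻¹ : Module.End R P) : P →ₗ[R] P)) =
            (∑ i ∈ F, b i ∘ₗ a i) * (↑u⁻¹ : Module.End R P) := by
          rw [Finset.sum_mul]
          refine Finset.sum_congr rfl fun i _ => ?_
          rfl
        rw [hcomp, hrest, u.mul_inv]

lemma summand_of_retract {R MM P I : Type u} [Ring R]
    [AddCommGroup MM] [Module R MM] [AddCommGroup P] [Module R P]
    (hfin : Module.Finite R P) (hart : IsArtinian R P) (hnoe : IsNoetherian R P)
    (hind : IsIndecomposableModule R P)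
    (s : P →ₗ[R] (I →₀ MM)) (q : (I →₀ MM) →ₗ[R] P) (hqs : ∀ x, q (s x) = x) :
    ∃ (ι : P →ₗ[R] MM) (π : MM →ₗ[R] P), ∀ x, π (ι x) = x := by
  classical
  haveI := hart; haveI := hnoe
  obtain ⟨t, ht⟩ := hfin.fg_top
  set F : Finset I := t.sup fun x => (s x).support with hF
  have hsupp : ∀ x : P, ↑(s x).support ⊆ (↑F : Set I) := by
    intro x
    have hx : x ∈ Submodule.span R (↑t : Set P) := by rw [ht]; trivial
    have hle : Submodule.span R (↑t : Set P) ≤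
        (Finsupp.supported MM R (↑F : Set I)).comap s := by
      rw [Submodule.span_le]
      intro y hy
      rw [SetLike.mem_coe, Submodule.mem_comap, Finsupp.mem_supported]
      exact Finset.coe_subset.mpr
        (Finset.le_sup (f := fun x => (s x).support) (Finset.mem_coe.mp hy))
    exact (Finsupp.mem_supported R (s x)).mp (Submodule.mem_comap.mp (hle hx))
  set e : I → Module.End R P := fun j => (q ∘ₗ Finsupp.lsingle j) ∘ₗ (Finsupp.lapply j ∘ₗ s)
    with he
  have hsum : ∑ j ∈ F, e j = 1 := by
    apply LinearMap.ext; intro x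
    have h1 : (∑ j ∈ F, e j) x = ∑ j ∈ F, q (Finsupp.single j (s x j)) := by
      rw [LinearMap.sum_apply]; rfl
    rw [h1, ← map_sum]
    have h2 : ∑ j ∈ F, Finsupp.single j (s x j) = s x := by
      rw [← Finsupp.sum_of_support_subset (s x) (hsupp x) _ (fun i _ => Finsupp.single_zero i)]
      exact Finsupp.sum_single (s x)
    rw [h2]
    simpa using hqs x
  exact retract_of_sum hind F (fun j => Finsupp.lapply j ∘ₗ s)
    (fun j => q ∘ₗ Finsupp.lsingle j) hsum

lemma summand_of_gens {R MM T P I : Type u} [Ring R]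
    [AddCommGroup MM] [Module R MM] [AddCommGroup T] [Module R T]
    [AddCommGroup P] [Module R P]
    (pL : T →ₗ[R] R) (hpsurj : Function.Surjective pL)
    (g : I → MM →ₗ[R] T)
    (hspan : ∀ x : T, x ∈ Submodule.span R (⋃ i, Set.range (g i)))
    (hfin : Module.Finite R P) (hart : IsArtinian R P) (hnoe : IsNoetherian R P)
    (hind : IsIndecomposableModule R P) (hproj : Module.Projective R P) :
    ∃ (ι : P →ₗ[R] MM) (π : MM →ₗ[R] P), ∀ x, π (ι x) = x := by
  classical
  set Φ : (I →₀ MM) →ₗ[R] R := Finsupp.lsum ℕ fun i => pL.comp (g i) with hΦdef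
  have hkey : Submodule.span R (⋃ i, Set.range (g i)) ≤ (LinearMap.range Φ).comap pL := by
    rw [Submodule.span_le]
    intro x hx
    simp only [Set.mem_iUnion, Set.mem_range] at hx
    obtain ⟨i, m, rfl⟩ := hx
    rw [SetLike.mem_coe, Submodule.mem_comap]
    exact ⟨Finsupp.single i m, by rw [hΦdef, Finsupp.lsum_single]; rfl⟩
  have hΦsurj : Function.Surjective Φ := by
    intro a
    obtain ⟨x, rfl⟩ := hpsurj a
    exact LinearMap.mem_range.mp (Submodule.mem_comap.mp (hkey (hspan x)))
  set q1 : (P →₀ R) →ₗ[R] P := Finsupp.lsum ℕ fun x => LinearMap.toSpanSingleton R P x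
    with hq1
  set q2 : (P →₀ (I →₀ MM)) →ₗ[R] (P →₀ R) := Finsupp.mapRange.linearMap Φ with hq2
  set q3 : ((P × I) →₀ MM) →ₗ[R] (P →₀ (I →₀ MM)) :=
    (Finsupp.finsuppProdLEquiv R).toLinearMap with hq3
  set Ψ : ((P × I) →₀ MM) →ₗ[R] P := q1 ∘ₗ q2 ∘ₗ q3 with hΨ
  have hΨsurj : Function.Surjective Ψ := by
    intro x
    obtain ⟨y, hy⟩ := hΦsurj 1
    refine ⟨(Finsupp.finsuppProdLEquiv R).symm (Finsupp.single x y), ?_⟩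
    show q1 (q2 (q3 ((Finsupp.finsuppProdLEquiv R).symm (Finsupp.single x y)))) = x
    have e3 : q3 ((Finsupp.finsuppProdLEquiv R).symm (Finsupp.single x y)) =
        Finsupp.single x y := (Finsupp.finsuppProdLEquiv R).apply_symm_apply _
    rw [e3, hq2]
    rw [show Finsupp.mapRange.linearMap Φ (Finsupp.single x y) = Finsupp.single x (Φ y) by
      simp]
    rw [hy, hq1, Finsupp.lsum_single]
    simp [LinearMap.toSpanSingleton_apply]
  obtain ⟨sec, hsec⟩ := Module.projective_lifting_property Ψ LinearMap.id hΨsurj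
  exact summand_of_retract hfin hart hnoe hind sec Ψ fun x => DFunLike.congr_fun hsec x

/-- If the regular `A`-`A`-bimodule `A` is a direct summand of `M ⊗_B N`,
then the left `A`-module `M` is faithful and every finite-dimensional indecomposable
projective-injective left `A`-module is a direct summand of `M`; similarly for the right
`A`-module `N`. -/
theorem stmt4 (k A B M N : Type u) [Field k]
    [Ring A] [Algebra k A] [FiniteDimensional k A]
    [Ring B] [Algebra k B] [FiniteDimensional k B]
    [AddCommGroup M] [Module k M] [Module A M] [Module Bᵐᵒᵖ M]
    [SMulCommClass A Bᵐᵒᵖ M] [IsScalarTower k A M] [IsScalarTower k Bᵐᵒᵖ M]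
    [FiniteDimensional k M]
    [AddCommGroup N] [Module k N] [Module B N] [Module Aᵐᵒᵖ N]
    [SMulCommClass B Aᵐᵒᵖ N] [IsScalarTower k B N] [IsScalarTower k Aᵐᵒᵖ N]
    [FiniteDimensional k N]
    (h : IsBimodSummand A A A (BalTensor B M N)) :
    ((∀ a : A, (∀ m : M, a • m = 0) → a = 0) ∧
      ∀ (P : Type u) [AddCommGroup P] [Module A P], Module.Finite A P →
        IsIndecomposableModule A P → Module.Projective A P → Module.Injective A P →
        ∃ (ι : P →ₗ[A] M) (π : M →ₗ[A] P), ∀ x, π (ι x) = x) ∧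
    ((∀ a : A, (∀ n : N, MulOpposite.op a • n = 0) → a = 0) ∧
      ∀ (P : Type u) [AddCommGroup P] [Module Aᵐᵒᵖ P], Module.Finite Aᵐᵒᵖ P →
        IsIndecomposableModule Aᵐᵒᵖ P → Module.Projective Aᵐᵒᵖ P → Module.Injective Aᵐᵒᵖ P →
        ∃ (ι : P →ₗ[Aᵐᵒᵖ] N) (π : N →ₗ[Aᵐᵒᵖ] P), ∀ x, π (ι x) = x) := by
  classical
  obtain ⟨iA, p, hi, hp, hpi⟩ := h
  have hp0 : p 0 = 0 := by
    have h00 := hp.map_add 0 0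
    rw [add_zero] at h00
    exact add_eq_left.mp h00.symm
  set pL : BalTensor B M N →ₗ[A] A :=
    { toFun := p, map_add' := hp.map_add,
      map_smul' := fun a x => by simpa using hp.map_lsmul a x } with hpL
  set pR : BalTensor B M N →ₗ[Aᵐᵒᵖ] A :=
    { toFun := p, map_add' := hp.map_add,
      map_smul' := fun c x => by simpa using hp.map_rsmul c x } with hpR
  have hpLsurj : Function.Surjective pL := fun a => ⟨iA a, hpi a⟩
  set eqA : A →ₗ[Aᵐᵒᵖ] Aᵐᵒᵖ :=
    { toFun := op, map_add' := fun a b => rfl,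
      map_smul' := fun c a => rfl } with heqA
  set pR' : BalTensor B M N →ₗ[Aᵐᵒᵖ] Aᵐᵒᵖ := eqA ∘ₗ pR with hpR'
  have hpRsurj : Function.Surjective pR' := fun a =>
    ⟨iA a.unop, by show op (p (iA a.unop)) = a; rw [hpi]; simp⟩
  set gN : N → M →ₗ[A] BalTensor B M N := fun n =>
    { toFun := fun m => BalTensor.tmul B M N m n
      map_add' := fun m m' => by
        show BalTensor.mk B M N ((m + m') ⊗ₜ[ℤ] n) = _
        rw [TensorProduct.add_tmul, map_add]
        rfl
      map_smul' := fun a m => by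
        simpa using (BalTensor.lsmul_tmul B M N A a m n).symm } with hgN
  set gM : M → N →ₗ[Aᵐᵒᵖ] BalTensor B M N := fun m =>
    { toFun := fun n => BalTensor.tmul B M N m n
      map_add' := fun n n' => by
        show BalTensor.mk B M N (m ⊗ₜ[ℤ] (n + n')) = _
        rw [TensorProduct.tmul_add, map_add]
        rfl
      map_smul' := fun c n => by
        simpa using (BalTensor.rsmul_tmul B M N A c m n).symm } with hgM
  have hspanL : ∀ x : BalTensor B M N,
      x ∈ Submodule.span A (⋃ n : N, Set.range (gN n)) := by
    intro x
    obtain ⟨y, rfl⟩ := BalTensor.mk_surjective B M N x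
    induction y using TensorProduct.induction_on with
    | zero => rw [map_zero]; exact Submodule.zero_mem _
    | tmul m n => exact Submodule.subset_span (Set.mem_iUnion.mpr ⟨n, ⟨m, rfl⟩⟩)
    | add y z hy hz => rw [map_add]; exact Submodule.add_mem _ hy hz
  have hspanR : ∀ x : BalTensor B M N,
      x ∈ Submodule.span Aᵐᵒᵖ (⋃ m : M, Set.range (gM m)) := by
    intro x
    obtain ⟨y, rfl⟩ := BalTensor.mk_surjective B M N x
    induction y using TensorProduct.induction_on with
    | zero => rw [map_zero]; exact Submodule.zero_mem _
    | tmul m n => exact Submodule.subset_span (Set.mem_iUnion.mpr ⟨m, ⟨n, rfl⟩⟩)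
    | add y z hy hz => rw [map_add]; exact Submodule.add_mem _ hy hz
  have faithL : ∀ a : A, (∀ m : M, a • m = 0) → a = 0 := by
    intro a ha
    have hzz : ∀ z : BalTensor B M N, a • z = 0 := by
      intro z
      obtain ⟨y, rfl⟩ := BalTensor.mk_surjective B M N z
      induction y using TensorProduct.induction_on with
      | zero => rw [map_zero, smul_zero]
      | tmul m n =>
          rw [show BalTensor.mk B M N (m ⊗ₜ[ℤ] n) = BalTensor.tmul B M N m n from rfl,
            BalTensor.lsmul_tmul B M N A a m n, ha m]
          show BalTensor.mk B M N ((0 : M) ⊗ₜ[ℤ] n) = 0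
          rw [TensorProduct.zero_tmul, map_zero]
      | add y z hy hz => rw [map_add, smul_add, hy, hz, add_zero]
    have h1 : a = a • p (iA 1) := by rw [hpi 1, smul_eq_mul, mul_one]
    rw [h1, ← hp.map_lsmul, hzz, hp0]
  have faithR : ∀ a : A, (∀ n : N, op a • n = 0) → a = 0 := by
    intro a ha
    have hzz : ∀ z : BalTensor B M N, op a • z = 0 := by
      intro z
      obtain ⟨y, rfl⟩ := BalTensor.mk_surjective B M N z
      induction y using TensorProduct.induction_on with
      | zero => rw [map_zero, smul_zero]
      | tmul m n =>
          rw [show BalTensor.mk B M N (m ⊗ₜ[ℤ] n) = BalTensor.tmul B M N m n from rfl,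
            BalTensor.rsmul_tmul B M N A (op a) m n, ha n]
          show BalTensor.mk B M N (m ⊗ₜ[ℤ] (0 : N)) = 0
          rw [TensorProduct.tmul_zero, map_zero]
      | add y z hy hz => rw [map_add, smul_add, hy, hz, add_zero]
    have h1 : a = op a • p (iA 1) := by rw [hpi 1, op_smul_eq_mul, one_mul]
    rw [h1, ← hp.map_rsmul, hzz, hp0]
  haveI : IsArtinianRing A := isArtinian_of_tower k inferInstance
  haveI : IsNoetherianRing A := isNoetherian_of_tower k inferInstance
  haveI : Module.Finite k Aᵐᵒᵖ :=
    Module.Finite.equiv (MulOpposite.opLinearEquiv k : A ≃ₗ[k] Aᵐᵒᵖ)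
  haveI : IsArtinianRing Aᵐᵒᵖ := isArtinian_of_tower k inferInstance
  haveI : IsNoetherianRing Aᵐᵒᵖ := isNoetherian_of_tower k inferInstance
  refine ⟨⟨faithL, ?_⟩, ⟨faithR, ?_⟩⟩
  · intro P _ _ hfin hind hproj _
    haveI := hfin
    exact summand_of_gens pL hpLsurj gN hspanL hfin inferInstance inferInstance hind hproj
  · intro P _ _ hfin hind hproj _
    haveI := hfin
    exact summand_of_gens pR' hpRsurj gM hspanR hfin inferInstance inferInstance hind hproj

end Stmt4

end

end JJ
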